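/- Closed-form for the q-Euler polynomial of order r: for 0 < q < 1, r ≥ 1, h ∈ ℤ with h - r + l > 0 ranges making series converge, and n ≥ 0, one has E_{n,q}^{(h,r)}(x) := 2^r ∑_{m=0}^∞ (m+r-1 choose m)_q (-q^{h-r})^m [m+x]_q^n = (2^r/(1-q)^n) ∑_{l=0}^n (n choose l)(-q^x)^l / (−q^{h-r+l}; q)_r, where (a;q)_r = ∏_{j=0}^{r-1}(1 - a q^j). -/

import Mathlib

/-- The `q`-number `[z]_q = (1 - q^z)/(1 - q)` for real `z`. -/
noncomputable def qNum (q z : ℝ) : ℝ := (1 - q ^ z) / (1 - q)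

/-- The Gaussian binomial coefficient `(n choose k)_q`, defined by the
`q`-Pascal recursion. -/
def gaussBinom {R : Type*} [CommRing R] (q : R) : ℕ → ℕ → R
  | _, 0 => 1
  | 0, _ + 1 => 0
  | n + 1, k + 1 => gaussBinom q n (k + 1) * q ^ (k + 1) + gaussBinom q n k

lemma gaussBinom_zero_right (q : ℝ) (n : ℕ) : gaussBinom q n 0 = 1 := by cases n <;> rfl

lemma gaussBinom_eq_zero (q : ℝ) : ∀ n k, n < k → gaussBinom q n k = 0
  | _, 0, h => absurd h (Nat.not_lt_zero _)
  | 0, k+1, _ => rfl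
  | n+1, k+1, h => by
    simp [gaussBinom, gaussBinom_eq_zero q n (k+1) (by omega),
      gaussBinom_eq_zero q n k (by omega)]

lemma gaussBinom_self (q : ℝ) : ∀ n, gaussBinom q n n = 1
  | 0 => rfl
  | n+1 => by
    simp [gaussBinom, gaussBinom_eq_zero q n (n+1) (by omega), gaussBinom_self q n]

lemma gaussBinom_nonneg {q : ℝ} (hq : 0 ≤ q) : ∀ n k, 0 ≤ gaussBinom q n k
  | n, 0 => by rw [gaussBinom_zero_right]; norm_num
  | 0, k+1 => le_of_eq rfl
  | n+1, k+1 => by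
    simp only [gaussBinom]
    have h1 := gaussBinom_nonneg hq n (k+1)
    have h2 := gaussBinom_nonneg hq n k
    positivity

lemma gaussBinom_le_choose {q : ℝ} (hq0 : 0 ≤ q) (hq1 : q ≤ 1) :
    ∀ n k, gaussBinom q n k ≤ (n.choose k : ℝ)
  | n, 0 => by simp [gaussBinom_zero_right]
  | 0, k+1 => by simp [gaussBinom]
  | n+1, k+1 => by
    simp only [gaussBinom, Nat.choose_succ_succ, Nat.cast_add]
    have h1 := gaussBinom_le_choose hq0 hq1 n (k+1)
    have h2 := gaussBinom_le_choose hq0 hq1 n k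
    have h3 := gaussBinom_nonneg hq0 n (k+1)
    have h4 : q ^ (k+1) ≤ 1 := pow_le_one₀ hq0 hq1
    nlinarith [pow_nonneg hq0 (k+1)]

lemma gaussBinom_summable {q : ℝ} (hq0 : 0 ≤ q) (hq1 : q ≤ 1) (s : ℕ) {z : ℝ}
    (hz : |z| < 1) : Summable (fun m : ℕ => gaussBinom q (m + s) m * z ^ m) := by
  apply Summable.of_norm_bounded (g := fun m : ℕ => ((m + s).choose s : ℝ) * |z| ^ m)
  · exact summable_choose_mul_geometric_of_norm_lt_one s (by simpa using hz)
  · intro m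
    rw [norm_mul, norm_pow, Real.norm_eq_abs, Real.norm_eq_abs,
      abs_of_nonneg (gaussBinom_nonneg hq0 _ _)]
    gcongr
    calc gaussBinom q (m + s) m ≤ ((m+s).choose m : ℝ) := gaussBinom_le_choose hq0 hq1 _ _
      _ = ((m+s).choose s : ℝ) := by rw [Nat.choose_symm_add]

lemma gaussBinom_tsum {q : ℝ} (hq0 : 0 ≤ q) (hq1 : q < 1) :
    ∀ (s : ℕ) {z : ℝ}, |z| < 1 →
    ∑' m : ℕ, gaussBinom q (m + s) m * z ^ m
      = ∏ j ∈ Finset.range (s+1), (1 - z * q ^ j)⁻¹ := by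
  intro s
  induction s with
  | zero =>
    intro z hz
    simp only [Nat.add_zero, gaussBinom_self, one_mul, zero_add, Finset.range_one,
      Finset.prod_singleton, pow_zero, mul_one]
    exact tsum_geometric_of_norm_lt_one (ξ := z) (by simpa using hz)
  | succ s ih =>
    intro z hz
    have hqz : |q * z| < 1 := by
      rw [abs_mul, abs_of_nonneg hq0]
      nlinarith [abs_nonneg z]
    set a : ℕ → ℝ := fun m => gaussBinom q (m + (s+1)) m * z ^ m with ha
    set b : ℕ → ℝ := fun m => gaussBinom q (m + s) m * (q * z) ^ m with hb
    have Sa : Summable a := gaussBinom_summable hq0 hq1.le (s+1) hz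
    have Sb : Summable b := gaussBinom_summable hq0 hq1.le s hqz
    have hab : ∀ m, a m - b m = (fun m => a m - b m) m := fun m => rfl
    have hc0 : a 0 - b 0 = 0 := by
      simp [ha, hb, gaussBinom_zero_right]
    have hcs : ∀ m, a (m+1) - b (m+1) = z * a m := by
      intro m
      simp only [ha, hb]
      have : gaussBinom q ((m+1) + (s+1)) (m+1)
          = gaussBinom q ((m+1) + s) (m+1) * q ^ (m+1) + gaussBinom q (m + (s+1)) m := by
        have e1 : (m+1) + (s+1) = ((m+1)+s) + 1 := by omega
        have e2 : (m+1)+s = m + (s+1) := by omega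
        rw [e1]
        simp [gaussBinom, e2]
      rw [this]
      ring
    have h1 : ∑' m, (a m - b m) = z * ∑' m, a m := by
      rw [Summable.tsum_eq_zero_add ((Sa.sub Sb)), hc0, zero_add, tsum_congr hcs, tsum_mul_left]
    have h2 : ∑' m, (a m - b m) = ∑' m, a m - ∑' m, b m := Summable.tsum_sub Sa Sb
    have hz1 : (1:ℝ) - z ≠ 0 := by
      have := abs_lt.mp hz
      intro hcon; linarith [hcon]
    have hA : ∑' m, a m = (∑' m, b m) * (1 - z)⁻¹ := by
      field_simp
      linarith [h1, h2]
    rw [hA, ih hqz, Finset.prod_range_succ' (fun j => (1 - z * q ^ j)⁻¹) (s+1)]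
    congr 1
    · refine Finset.prod_congr rfl fun j _ => ?_
      congr 2
      rw [pow_succ']
      ring
    · simp

theorem qEuler_closed_form (q x : ℝ) (hq0 : 0 < q) (hq1 : q < 1)
    (r : ℕ) (hr : 1 ≤ r) (h : ℤ) (hh : (r : ℤ) < h) (n : ℕ) :
    (2 : ℝ) ^ r * ∑' m : ℕ,
        gaussBinom q (m + r - 1) m * (-(q ^ ((h : ℝ) - r))) ^ m * qNum q (m + x) ^ n
      = (2 : ℝ) ^ r / (1 - q) ^ n *
          ∑ l ∈ Finset.range (n + 1),
            (n.choose l : ℝ) * (-(q ^ x)) ^ l /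
              ∏ j ∈ Finset.range r, (1 + q ^ ((h : ℝ) - r + l + j)) := by
  obtain ⟨s, rfl⟩ : ∃ s, r = s + 1 := ⟨r - 1, by omega⟩
  have he0 : (1:ℝ) ≤ (h:ℝ) - (↑(s+1):ℝ) := by
    have h1 : ((s+1:ℕ) : ℤ) + 1 ≤ h := hh
    have h2 : ((s+1:ℕ) : ℝ) + 1 ≤ (h:ℝ) := by exact_mod_cast h1
    linarith
  have hel : ∀ l : ℕ, (0:ℝ) < (h:ℝ) - (↑(s+1):ℝ) + l := fun l => by
    have := Nat.cast_nonneg (α := ℝ) l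
    linarith
  have hwlt : ∀ l : ℕ, |(-(q ^ ((h:ℝ) - (↑(s+1):ℝ) + l)))| < 1 := fun l => by
    rw [abs_neg, abs_of_pos (Real.rpow_pos_of_pos hq0 _)]
    exact Real.rpow_lt_one hq0.le hq1 (hel l)
  have hterm : ∀ m : ℕ,
      gaussBinom q (m + (s+1) - 1) m * (-(q ^ ((h:ℝ) - ↑(s+1)))) ^ m * qNum q (↑m + x) ^ n
        = ∑ l ∈ Finset.range (n+1),
            (n.choose l : ℝ) * (-(q ^ x)) ^ l / (1-q)^n *
              (gaussBinom q (m + s) m * (-(q ^ ((h:ℝ) - ↑(s+1) + l))) ^ m) := by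
    intro m
    have hms : m + (s+1) - 1 = m + s := by omega
    rw [hms, qNum, div_pow]
    have hqx : q ^ ((m:ℝ) + x) = q ^ x * (q:ℝ) ^ (m:ℕ) := by
      rw [Real.rpow_add hq0, Real.rpow_natCast, mul_comm]
    rw [hqx, show (1 : ℝ) - q ^ x * (q:ℝ) ^ m = -(q ^ x * (q:ℝ) ^ m) + 1 by ring, add_pow]
    rw [Finset.sum_div, Finset.mul_sum]
    refine Finset.sum_congr rfl fun l hl => ?_
    have key : (-(q ^ ((h:ℝ) - ↑(s+1) + (l:ℕ)))) ^ m
        = (-(q ^ ((h:ℝ) - ↑(s+1)))) ^ m * ((q:ℝ) ^ m) ^ l := by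
      rw [pow_right_comm q m l, ← mul_pow]
      congr 1
      rw [← Real.rpow_natCast q l, neg_mul, ← Real.rpow_add hq0]
    rw [key, one_pow,
      show (-(q ^ x * (q:ℝ) ^ m)) ^ l = (-(q^x))^l * ((q:ℝ)^m)^l by
        rw [show -(q ^ x * (q:ℝ) ^ m) = (-(q^x)) * ((q:ℝ)^m) by ring, mul_pow]]
    ring
  rw [tsum_congr hterm,
    Summable.tsum_finsetSum (fun l _ => Summable.mul_left _ (gaussBinom_summable hq0.le hq1.le s (hwlt l))),
    Finset.mul_sum, Finset.mul_sum]
  refine Finset.sum_congr rfl fun l hl => ?_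
  rw [tsum_mul_left, gaussBinom_tsum hq0.le hq1 s (hwlt l)]
  have hprod : ∏ j ∈ Finset.range (s+1), (1 - (-(q ^ ((h:ℝ) - ↑(s+1) + l))) * q ^ j)⁻¹
      = (∏ j ∈ Finset.range (s+1), (1 + q ^ ((h:ℝ) - ↑(s+1) + l + j)))⁻¹ := by
    rw [← Finset.prod_inv_distrib]
    refine Finset.prod_congr rfl fun j _ => ?_
    have hj : q ^ ((h:ℝ) - ↑(s+1) + ↑l) * (q:ℝ) ^ j = q ^ ((h:ℝ) - ↑(s+1) + ↑l + ↑j) := by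
      rw [← Real.rpow_natCast q j, ← Real.rpow_add hq0]
    rw [← hj]
    congr 1
    ring
  rw [hprod, div_eq_mul_inv, div_eq_mul_inv, div_eq_mul_inv]
  ring
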